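/- Graph-level soundness of the abstract interpretation: suppose P:[] →* e:ρ. If e:ρ → e':ρ', G in the graph-generating environment semantics, then e → e', G in the graph-generating approximate semantics for P; and if e:ρ ⇓ e':ρ', G, then e ⇓ e', G in the graph-generating approximate semantics for P. -/
import Mathlib


/- Untyped λ-expressions. -/
inductive Exp : Type
  | var : String → Exp
  | app : Exp → Exp → Exp
  | lam : String → Exp → Exp
deriving DecidableEq

namespace Exp

/-- Free variables. -/
def fv : Exp → Finset String
  | var x => {x}
  | app e1 e2 => fv e1 ∪ fv e2
  | lam x e => fv e \ {x}

/-- The set of subexpressions of a λ-expression. -/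
def subexp : Exp → Set Exp
  | var x => {var x}
  | app e1 e2 => insert (app e1 e2) (subexp e1 ∪ subexp e2)
  | lam x e => insert (lam x e) (subexp e)

end Exp

/- Values (closures), environments and states of the environment-based
semantics.  An environment is a (partial) map from variable names to values;
a state `e:ρ` pairs an expression with an environment. -/
inductive Val : Type
  | clos : String → Exp → (String → Option Val) → Val

abbrev Env := String → Option Val
abbrev State := Exp × Env

/-- A value `λx.e:ρ` viewed as a state. -/
def Val.toState : Val → State
  | .clos x e ρ => (Exp.lam x e, ρ)

/-- The λ-expression component of a value. -/
def Val.toExp : Val → Exp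
  | .clos x e _ => Exp.lam x e

def Env.update (ρ : Env) (x : String) (v : Val) : Env :=
  fun y => if y = x then some v else ρ y

def Env.empty : Env := fun _ => none
/-- Arc labels: `=` (eq) and `↓` (dec). -/
inductive Lab : Type
  | eq : Lab
  | dec : Lab
deriving DecidableEq

/-- Name paths; here the nodes of generated size-change graphs are `ε = []`
or single variables `[y]`. -/
abbrev NP := List String
abbrev Arc := NP × Lab × NP
abbrev ArcSet := Set Arc

/-- `id= = {ε =→ ε} ∪ {y =→ y | y ∈ s}`. -/
def idEqS (s : Set String) : ArcSet :=
  {a | a = ([], Lab.eq, []) ∨ ∃ y ∈ s, a = ([y], Lab.eq, [y])}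

/-- `id↓ = {ε ↓→ ε} ∪ {y =→ y | y ∈ s}`. -/
def idDecS (s : Set String) : ArcSet :=
  {a | a = ([], Lab.dec, []) ∨ ∃ y ∈ s, a = ([y], Lab.eq, [y])}

/-- The graph `{x =→ ε} ∪ {x ↓→ y | y ∈ s}` of the variable rule. -/
def varGraphS (x : String) (s : Set String) : ArcSet :=
  {a | a = ([x], Lab.eq, []) ∨ ∃ y ∈ s, a = ([x], Lab.dec, [y])}

/-- `G₁^{-ε/λx.e₀}`: keep arcs between variables, replace `ε r→ z` (`z` a
variable) by `ε ↓→ z`, and, when `x ∉ fv(e₀)`, additionally replace each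
arc `p r→ ε` by `p ↓→ ε`.  (`fve0` is `fv(e₀)`.) -/
def GminusS (x : String) (fve0 : Set String) (G1 : ArcSet) : ArcSet :=
  {a | (∃ (y : String) (r : Lab) (z : String), a = ([y], r, [z]) ∧ ([y], r, [z]) ∈ G1) ∨
       (∃ z : String, a = (([] : NP), Lab.dec, [z]) ∧ ∃ r, (([] : NP), r, [z]) ∈ G1) ∨
       (x ∉ fve0 ∧ ∃ p : NP, a = (p, Lab.dec, ([] : NP)) ∧ ∃ r, (p, r, ([] : NP)) ∈ G1)}

/-- `G₂^{ε↦x}`: `y r→ x` for each `y r→ ε ∈ G₂`, and `ε ↓→ x` for each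
`ε r→ ε ∈ G₂`. -/
def GepsS (x : String) (G2 : ArcSet) : ArcSet :=
  {a | (∃ (y : String) (r : Lab), a = ([y], r, [x]) ∧ ([y], r, ([] : NP)) ∈ G2) ∨
       (a = (([] : NP), Lab.dec, [x]) ∧ ∃ r, (([] : NP), r, ([] : NP)) ∈ G2)}

/-- `∪_{e₀}`: union restricted to arcs whose target is in `fv(e₀) ∪ {ε}`. -/
def unionRS (fve0 : Set String) (A B : ArcSet) : ArcSet :=
  {a | a ∈ A ∪ B ∧ (a.2.2 = ([] : NP) ∨ ∃ y ∈ fve0, a.2.2 = [y])}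

/-- The label set `R(x,z)` used in graph composition. -/
def labelsA (G1 G2 : ArcSet) (x z : NP) : Set Lab :=
  {r | ∃ y s, ((x, r, y) ∈ G1 ∧ (y, s, z) ∈ G2) ∨
              ((x, s, y) ∈ G1 ∧ (y, r, z) ∈ G2)}

/-- Composition `G₁;G₂` of size-change graphs (as arc sets): `x ↓→ z` whenever
`↓ ∈ R(x,z)`, and `x =→ z` whenever `R(x,z) = {=}`. -/
def compA (G1 G2 : ArcSet) : ArcSet :=
  {a | (∃ x z, a = (x, Lab.dec, z) ∧ Lab.dec ∈ labelsA G1 G2 x z) ∨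
       (∃ x z, a = (x, Lab.eq, z) ∧ labelsA G1 G2 x z = {Lab.eq})}
/- The graph-generating environment semantics:
judgements `e:ρ ⇓ v, G` and `e:ρ →x e':ρ', G` (x ∈ {r,d,c}). -/
mutual
  inductive EvalG : State → Val → ArcSet → Prop
    | value (x : String) (e : Exp) (ρ : Env) :
        EvalG (Exp.lam x e, ρ) (Val.clos x e ρ) (idEqS ↑(Exp.lam x e).fv)
    | var {ρ : Env} {x : String} {v : Val} :
        ρ x = some v → EvalG (Exp.var x, ρ) v (varGraphS x ↑v.toExp.fv)
    | apply {s s' : State} {v : Val} {G' G : ArcSet} :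
        CallGc s s' G' → EvalG s' v G → EvalG s v (compA G' G)
  inductive CallGc : State → State → ArcSet → Prop
    | call {e1 e2 : Exp} {ρ ρ0 : Env} {x : String} {e0 : Exp} {v2 : Val}
        {G1 G2 : ArcSet} :
        EvalG (e1, ρ) (Val.clos x e0 ρ0) G1 → EvalG (e2, ρ) v2 G2 →
        CallGc (Exp.app e1 e2, ρ) (e0, Env.update ρ0 x v2)
          (unionRS ↑e0.fv (GminusS x ↑e0.fv G1) (GepsS x G2))
end

inductive CallGr : State → State → ArcSet → Prop
  | oper (e1 e2 : Exp) (ρ : Env) :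
      CallGr (Exp.app e1 e2, ρ) (e1, ρ) (idDecS ↑e1.fv)

inductive CallGd : State → State → ArcSet → Prop
  | opnd {e1 : Exp} {ρ : Env} {v1 : Val} {G1 : ArcSet} (e2 : Exp) :
      EvalG (e1, ρ) v1 G1 → CallGd (Exp.app e1 e2, ρ) (e2, ρ) (idDecS ↑e2.fv)

/-- The graph-generating call relation (union of `→r`, `→d`, `→c`). -/
def CallGAny (s s' : State) (G : ArcSet) : Prop :=
  CallGr s s' G ∨ CallGd s s' G ∨ CallGc s s' G
/- The graph-generating approximate semantics (for a fixed program `P`):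
judgements `e ⇓ e', G` and `e →x e', G` on λ-expressions. -/
mutual
  inductive EvalAG (P : Exp) : Exp → Exp → ArcSet → Prop
    | value (x : String) (e : Exp) :
        EvalAG P (Exp.lam x e) (Exp.lam x e) (idEqS ↑(Exp.lam x e).fv)
    | var {e1 e2 : Exp} {x : String} {e0 v2 : Exp} {G1 G2 : ArcSet} :
        Exp.app e1 e2 ∈ Exp.subexp P →
        EvalAG P e1 (Exp.lam x e0) G1 → EvalAG P e2 v2 G2 →
        EvalAG P (Exp.var x) v2 (varGraphS x ↑v2.fv)
    | apply {a e' v : Exp} {G' G : ArcSet} :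
        CallAGc P a e' G' → EvalAG P e' v G → EvalAG P a v (compA G' G)
  inductive CallAGc (P : Exp) : Exp → Exp → ArcSet → Prop
    | call {e1 e2 : Exp} {x : String} {e0 v2 : Exp} {G1 G2 : ArcSet} :
        EvalAG P e1 (Exp.lam x e0) G1 → EvalAG P e2 v2 G2 →
        CallAGc P (Exp.app e1 e2) e0
          (unionRS ↑e0.fv (GminusS x ↑e0.fv G1) (GepsS x G2))
end

inductive CallAGr (P : Exp) : Exp → Exp → ArcSet → Prop
  | oper (e1 e2 : Exp) : CallAGr P (Exp.app e1 e2) e1 (idDecS ↑e1.fv)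

inductive CallAGd (P : Exp) : Exp → Exp → ArcSet → Prop
  | opnd (e1 e2 : Exp) : CallAGd P (Exp.app e1 e2) e2 (idDecS ↑e2.fv)

/-- The approximate graph-generating call relation (union of `→r`, `→d`, `→c`). -/
def CallAGAny (P : Exp) (e e' : Exp) (G : ArcSet) : Prop :=
  CallAGr P e e' G ∨ CallAGd P e e' G ∨ CallAGc P e e' G

/-- The call relation of the graph-generating environment semantics,
forgetting the graphs. -/
def CallGU (s s' : State) : Prop := ∃ G, CallGAny s s' G

/- ===== auxiliary lemmas ===== -/

lemma subexp_self (e : Exp) : e ∈ e.subexp := by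
  cases e <;> simp [Exp.subexp]

lemma subexp_trans : ∀ (b a : Exp), a ∈ b.subexp → a.subexp ⊆ b.subexp := by
  intro b
  induction b with
  | var x =>
    intro a ha
    simp [Exp.subexp] at ha
    subst ha; simp [Exp.subexp]
  | app e1 e2 ih1 ih2 =>
    intro a ha
    simp only [Exp.subexp, Set.mem_insert_iff, Set.mem_union] at ha
    rcases ha with rfl | h | h
    · exact subset_rfl
    · intro z hz
      simp only [Exp.subexp, Set.mem_insert_iff, Set.mem_union]
      exact Or.inr (Or.inl (ih1 a h hz))
    · intro z hz
      simp only [Exp.subexp, Set.mem_insert_iff, Set.mem_union]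
      exact Or.inr (Or.inr (ih2 a h hz))
  | lam x e ih =>
    intro a ha
    simp only [Exp.subexp, Set.mem_insert_iff] at ha
    rcases ha with rfl | h
    · exact subset_rfl
    · intro z hz
      simp only [Exp.subexp, Set.mem_insert_iff]
      exact Or.inr (ih a h hz)

lemma subexp_app_left (e1 e2 : Exp) : e1 ∈ (Exp.app e1 e2).subexp := by
  simp only [Exp.subexp, Set.mem_insert_iff, Set.mem_union]
  exact Or.inr (Or.inl (subexp_self e1))

lemma subexp_app_right (e1 e2 : Exp) : e2 ∈ (Exp.app e1 e2).subexp := by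
  simp only [Exp.subexp, Set.mem_insert_iff, Set.mem_union]
  exact Or.inr (Or.inr (subexp_self e2))

lemma subexp_lam_body (x : String) (e : Exp) : e ∈ (Exp.lam x e).subexp := by
  simp only [Exp.subexp, Set.mem_insert_iff]
  exact Or.inr (subexp_self e)

/-- Witness that a binding was produced by a call at some application
subexpression of `P`. -/
def Binds (P : Exp) (x : String) (w : Exp) : Prop :=
  ∃ e1 e2 e0 G1 G2, Exp.app e1 e2 ∈ P.subexp ∧
    EvalAG P e1 (Exp.lam x e0) G1 ∧ EvalAG P e2 w G2

/-- Well-formed values: the closure expression is a subexpression of `P`, and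
each binding in the closure environment is well formed and produced by a call
inside `P`. -/
inductive WFv (P : Exp) : Val → Prop
  | mk {x : String} {e : Exp} {ρ : Env} :
      Exp.lam x e ∈ P.subexp →
      (∀ y v, ρ y = some v → WFv P v) →
      (∀ y v, ρ y = some v → Binds P y v.toExp) →
      WFv P (Val.clos x e ρ)

/-- Well-formed environments. -/
def WFenv (P : Exp) (ρ : Env) : Prop :=
  (∀ y v, ρ y = some v → WFv P v) ∧ (∀ y v, ρ y = some v → Binds P y v.toExp)

lemma call_case (P : Exp) {e1 e2 : Exp} {ρ0 : Env} {x : String} {e0 : Exp}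
    {v2 : Val} {G1 G2 : ArcSet}
    (hsub : Exp.app e1 e2 ∈ P.subexp)
    (h1 : EvalAG P e1 (Exp.lam x e0) G1) (hv1 : WFv P (Val.clos x e0 ρ0))
    (h2 : EvalAG P e2 v2.toExp G2) (hv2 : WFv P v2) :
    CallAGc P (Exp.app e1 e2) e0
        (unionRS ↑e0.fv (GminusS x ↑e0.fv G1) (GepsS x G2)) ∧
      e0 ∈ P.subexp ∧ WFenv P (Env.update ρ0 x v2) := by
  rcases hv1 with ⟨hlam, henv1, henv2⟩
  refine ⟨CallAGc.call h1 h2, subexp_trans P _ hlam (subexp_lam_body x e0), ?_, ?_⟩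
  · intro y v hy
    by_cases hyx : y = x
    · subst hyx
      simp only [Env.update, if_pos rfl] at hy
      cases hy; exact hv2
    · simp only [Env.update, if_neg hyx] at hy
      exact henv1 y v hy
  · intro y v hy
    by_cases hyx : y = x
    · subst hyx
      simp only [Env.update, if_pos rfl] at hy
      cases hy
      exact ⟨e1, e2, e0, G1, G2, hsub, h1, h2⟩
    · simp only [Env.update, if_neg hyx] at hy
      exact henv2 y v hy

lemma sound_eval (P : Exp) :
    ∀ s v G, EvalG s v G → s.1 ∈ P.subexp → WFenv P s.2 →
      EvalAG P s.1 v.toExp G ∧ WFv P v := by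
  intro s v G h
  refine EvalG.rec
    (motive_1 := fun s v G _ => s.1 ∈ P.subexp → WFenv P s.2 →
      EvalAG P s.1 v.toExp G ∧ WFv P v)
    (motive_2 := fun s s' G _ => s.1 ∈ P.subexp → WFenv P s.2 →
      CallAGc P s.1 s'.1 G ∧ s'.1 ∈ P.subexp ∧ WFenv P s'.2)
    ?_ ?_ ?_ ?_ h
  · intro x e ρ hsub hwf
    exact ⟨EvalAG.value x e, WFv.mk hsub hwf.1 hwf.2⟩
  · intro ρ x v hx hsub hwf
    obtain ⟨e1, e2, e0, G1, G2, hsubA, h1, h2⟩ := hwf.2 x v hx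
    exact ⟨EvalAG.var hsubA h1 h2, hwf.1 x v hx⟩
  · intro s s' v G' G hc he ih' ih hsub hwf
    obtain ⟨hca, hs', hw'⟩ := ih' hsub hwf
    obtain ⟨hea, hv⟩ := ih hs' hw'
    exact ⟨EvalAG.apply hca hea, hv⟩
  · intro e1 e2 ρ ρ0 x e0 v2 G1 G2 h1 h2 ih1 ih2 hsub hwf
    obtain ⟨ha1, hv1⟩ := ih1 (subexp_trans P _ hsub (subexp_app_left e1 e2)) hwf
    obtain ⟨ha2, hv2⟩ := ih2 (subexp_trans P _ hsub (subexp_app_right e1 e2)) hwf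
    exact call_case P hsub ha1 hv1 ha2 hv2

lemma sound_call (P : Exp) :
    ∀ s s' G, CallGc s s' G → s.1 ∈ P.subexp → WFenv P s.2 →
      CallAGc P s.1 s'.1 G ∧ s'.1 ∈ P.subexp ∧ WFenv P s'.2 := by
  intro s s' G h hsub hwf
  cases h with
  | call h1 h2 =>
    obtain ⟨ha1, hv1⟩ := sound_eval P _ _ _ h1
      (subexp_trans P _ hsub (subexp_app_left _ _)) hwf
    obtain ⟨ha2, hv2⟩ := sound_eval P _ _ _ h2
      (subexp_trans P _ hsub (subexp_app_right _ _)) hwf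
    exact call_case P hsub ha1 hv1 ha2 hv2

lemma reach_inv (P : Exp) :
    ∀ s, Relation.ReflTransGen CallGU (P, Env.empty) s →
      s.1 ∈ P.subexp ∧ WFenv P s.2 := by
  intro s h
  induction h with
  | refl => refine ⟨subexp_self P, fun y v hy => by simp [Env.empty] at hy,
      fun y v hy => by simp [Env.empty] at hy⟩
  | tail hab hbc ih =>
    obtain ⟨G, hG⟩ := hbc
    rcases hG with h | h | h
    · cases h with
      | oper e1 e2 ρ =>
        exact ⟨subexp_trans P _ ih.1 (subexp_app_left e1 e2), ih.2⟩
    · cases h with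
      | opnd e2 h1 =>
        exact ⟨subexp_trans P _ ih.1 (subexp_app_right _ e2), ih.2⟩
    · obtain ⟨_, h2, h3⟩ := sound_call P _ _ _ h ih.1 ih.2
      exact ⟨h2, h3⟩

/-- Graph-level soundness of the abstract interpretation: every call or
evaluation (with its size-change graph) from a state reachable from `P:[]` is
matched, with the same graph, by the graph-generating approximate
semantics. -/
theorem abstract_interpretation_graphs_sound (P : Exp) (hP : P.fv = ∅) :
    (∀ (e : Exp) (ρ : Env) (e' : Exp) (ρ' : Env) (G : ArcSet),
      Relation.ReflTransGen CallGU (P, Env.empty) (e, ρ) →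
      CallGAny (e, ρ) (e', ρ') G → CallAGAny P e e' G) ∧
    (∀ (e : Exp) (ρ : Env) (v : Val) (G : ArcSet),
      Relation.ReflTransGen CallGU (P, Env.empty) (e, ρ) →
      EvalG (e, ρ) v G → EvalAG P e v.toExp G) := by
  constructor
  · intro e ρ e' ρ' G hr hc
    obtain ⟨hsub, hwf⟩ := reach_inv P _ hr
    rcases hc with h | h | h
    · cases h
      exact Or.inl (CallAGr.oper _ _)
    · cases h
      exact Or.inr (Or.inl (CallAGd.opnd _ _))
    · exact Or.inr (Or.inr (sound_call P _ _ _ h hsub hwf).1)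
  · intro e ρ v G hr he
    obtain ⟨hsub, hwf⟩ := reach_inv P _ hr
    exact (sound_eval P _ _ _ he hsub hwf).1
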